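/- Let P, D ∈ ℍ[t] with P ≠ 0 satisfy the Study condition P·D̄ + D·P̄ = 0, let α ∈ ℝ[t] be nonzero and let b ∈ ℍ[t]. If the trajectory of the origin under C = P + εD equals −2b/α, in the sense that α·(D·P̄) = (P·P̄)·b as quaternion polynomials, then b·P = α·D; hence (α + εb)·P = α·(P + εD), i.e. the motion polynomial C agrees, up to the real polynomial factor α, with a motion polynomial of the form (α + εb)·A with A = P. -/

import Mathlib

open Polynomial

noncomputable section

set_option synthInstance.maxHeartbeats 1000000

/-- Embedding of real polynomials into quaternion polynomials (scalar coefficients). -/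
def toQ : Polynomial ℝ →+* Polynomial (Quaternion ℝ) :=
  mapRingHom (algebraMap ℝ (Quaternion ℝ))

/-- Coefficientwise quaternion conjugation of a quaternion polynomial. -/
def pconj (p : Polynomial (Quaternion ℝ)) : Polynomial (Quaternion ℝ) :=
  p.sum fun n a => monomial n (star a)

lemma pconj_coeff (p : Polynomial (Quaternion ℝ)) (n : ℕ) :
    (pconj p).coeff n = star (p.coeff n) := by
  unfold pconj
  rw [Polynomial.sum, Polynomial.finset_sum_coeff]
  simp only [coeff_monomial]
  rw [Finset.sum_ite_eq' p.support n (fun i => star (p.coeff i))]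
  split_ifs with h
  · rfl
  · rw [Polynomial.notMem_support_iff.mp h, star_zero]

lemma pconj_pconj (p : Polynomial (Quaternion ℝ)) : pconj (pconj p) = p :=
  Polynomial.ext fun n => by simp [pconj_coeff]

lemma pconj_add (p q : Polynomial (Quaternion ℝ)) : pconj (p + q) = pconj p + pconj q :=
  Polynomial.ext fun n => by simp [pconj_coeff]

lemma pconj_mul (p q : Polynomial (Quaternion ℝ)) :
    pconj (p * q) = pconj q * pconj p := by
  apply Polynomial.ext; intro n
  rw [pconj_coeff, coeff_mul, coeff_mul, star_sum]
  rw [← Finset.HasAntidiagonal.map_swap_antidiagonal (n := n), Finset.sum_map]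
  simp [pconj_coeff]

lemma toQ_coeff (r : Polynomial ℝ) (n : ℕ) :
    (toQ r).coeff n = (r.coeff n : Quaternion ℝ) := by
  simp [toQ]

lemma toQ_commute (r : Polynomial ℝ) (q : Polynomial (Quaternion ℝ)) :
    toQ r * q = q * toQ r := by
  apply Polynomial.ext; intro n
  rw [coeff_mul, coeff_mul]
  rw [← Finset.HasAntidiagonal.map_swap_antidiagonal (n := n), Finset.sum_map]
  simp [toQ_coeff, Quaternion.coe_commutes]

/-- The real part polynomial. -/
def preal (p : Polynomial (Quaternion ℝ)) : Polynomial ℝ :=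
  p.sum fun n a => monomial n a.re

lemma preal_coeff (p : Polynomial (Quaternion ℝ)) (n : ℕ) :
    (preal p).coeff n = (p.coeff n).re := by
  unfold preal
  rw [Polynomial.sum, Polynomial.finset_sum_coeff]
  simp only [coeff_monomial]
  rw [Finset.sum_ite_eq' p.support n (fun i => (p.coeff i).re)]
  split_ifs with h
  · rfl
  · rw [Polynomial.notMem_support_iff.mp h]; rfl

lemma selfadj_eq_toQ {p : Polynomial (Quaternion ℝ)} (h : pconj p = p) :
    toQ (preal p) = p := by
  apply Polynomial.ext; intro n
  rw [toQ_coeff, preal_coeff]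
  have := congrArg (fun q => Polynomial.coeff q n) h
  simp only [pconj_coeff] at this
  exact (Quaternion.star_eq_self.mp this).symm

lemma pconj_ne_zero {p : Polynomial (Quaternion ℝ)} (h : p ≠ 0) : pconj p ≠ 0 := by
  intro h0
  apply h
  have := congrArg pconj h0
  rwa [pconj_pconj, show pconj 0 = 0 from Polynomial.ext fun n => by simp [pconj_coeff]] at this

open TrivSqZeroExt DualNumber in
/-- If `P ≠ 0` and `D` satisfy the Study condition, `α ≠ 0` is real and
the trajectory of the origin under `C = P + εD` equals `−2b/α` in the sense
`α·(D·P̄) = (P·P̄)·b`, then `b·P = α·D`; hence `(α + εb)·P = α·(P + εD)` as dual quaternion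
polynomials, i.e. `C` agrees up to the real polynomial factor `α` with `(α + εb)·A`, `A = P`. -/
theorem motion_polynomial_factorization (P D : Polynomial (Quaternion ℝ)) (hP : P ≠ 0)
    (hStudy : P * pconj D + D * pconj P = 0)
    (α : Polynomial ℝ) (hα : α ≠ 0) (b : Polynomial (Quaternion ℝ))
    (htraj : toQ α * (D * pconj P) = (P * pconj P) * b) :
    b * P = toQ α * D ∧
    (inl (toQ α) + eps * inl b) * (inl P : DualNumber (Polynomial (Quaternion ℝ)))
      = inl (toQ α) * (inl P + eps * inl D) := by
  -- N = P * pconj P is a real (central) polynomial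
  set N := P * pconj P with hN
  have hself : pconj N = N := by
    rw [hN, pconj_mul, pconj_pconj]
  have hNtoQ : toQ (preal N) = N := selfadj_eq_toQ hself
  have hNcomm : ∀ q, N * q = q * N := by
    intro q
    rw [← hNtoQ, toQ_commute]
  have hQP : pconj P * P = N := by
    have hT : toQ (preal (P + pconj P)) = P + pconj P := by
      apply selfadj_eq_toQ
      rw [pconj_add, pconj_pconj, add_comm]
    set T := P + pconj P with hTdef
    have hTc : ∀ q, T * q = q * T := by
      intro q; rw [← hT, toQ_commute]
    have h1 : pconj P = T - P := by rw [hTdef]; abel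
    rw [h1, sub_mul, hN, h1, mul_sub, hTc P]
  have hNne : N ≠ 0 := mul_ne_zero hP (pconj_ne_zero hP)
  have hmain : b * P = toQ α * D := by
    have h2 : toQ α * D * (pconj P * P) = N * (b * P) := by
      have := congrArg (fun x => x * P) htraj
      simp only [mul_assoc] at this ⊢
      exact this
    rw [hQP, ← hNcomm (toQ α * D)] at h2
    exact (mul_left_cancel₀ hNne h2).symm
  refine ⟨hmain, ?_⟩
  ext : 1
  · simp [toQ_commute]
  · simp [hmain, toQ_commute]
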